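/- arXiv:2204.06621 — 6 statements merged into one kernel-verified Lean document; each statement's English description precedes it below -/
import Mathlib

section
/- Let B be a torsion-free commutative ring (viewed inside ℚ ⊗ B). Then the set I_P(B) := {x ∈ B : x^n/n! ∈ B for all n ≥ 1} is an ideal of B, and moreover for every x ∈ I_P(B) and every m ≥ 1, the divided power x^[m] := x^m/m! again lies in I_P(B). -/
/-- Choice of divided-power quotients: a function `f` with `x ^ i = i ! * f i` for all `i`. -/
lemma dp_choice {B : Type*} [CommRing B] (x : B)
    (hx : ∀ n : ℕ, 1 ≤ n → ∃ y : B, x ^ n = (n.factorial : B) * y) :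
    ∃ f : ℕ → B, ∀ i : ℕ, x ^ i = (i.factorial : B) * f i := by
  refine ⟨fun i => if h : 1 ≤ i then (hx i h).choose else 1, fun i => ?_⟩
  by_cases h : 1 ≤ i
  · simpa [h] using (hx i h).choose_spec
  · interval_cases i; simp

/-- Let `B` be a torsion-free commutative ring.  The set
`I_P(B) = {x ∈ B : n! ∣ x^n for all n ≥ 1}` (the condition `x^n/n! ∈ B` inside `ℚ ⊗ B`)
is an ideal of `B`, and for every `x ∈ I_P(B)`, every `m ≥ 1` and every divided power
`z = x^[m]` (i.e. `x^m = m! * z`), the element `z` again lies in `I_P(B)`. -/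
theorem statement0 (B : Type*) [CommRing B]
    (htf : ∀ (n : ℕ), n ≠ 0 → ∀ x : B, (n : B) * x = 0 → x = 0) :
    (∃ I : Ideal B, ∀ x : B,
        x ∈ I ↔ ∀ n : ℕ, 1 ≤ n → ∃ y : B, x ^ n = (n.factorial : B) * y) ∧
    (∀ x : B, (∀ n : ℕ, 1 ≤ n → ∃ y : B, x ^ n = (n.factorial : B) * y) →
      ∀ m : ℕ, 1 ≤ m → ∀ z : B, x ^ m = (m.factorial : B) * z →
        ∀ n : ℕ, 1 ≤ n → ∃ w : B, z ^ n = (n.factorial : B) * w) := by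
  constructor
  · refine ⟨{ carrier := {x : B | ∀ n : ℕ, 1 ≤ n → ∃ y : B, x ^ n = (n.factorial : B) * y},
                zero_mem' := fun n hn => ⟨0, by rw [zero_pow (by omega : n ≠ 0), mul_zero]⟩,
                add_mem' := ?_,
                smul_mem' := ?_ }, fun x => Iff.rfl⟩
    · intro x y hx hy n hn
      obtain ⟨f, hf⟩ := dp_choice x hx
      obtain ⟨g, hg⟩ := dp_choice y hy
      refine ⟨∑ i ∈ Finset.range (n + 1), f i * g (n - i), ?_⟩
      rw [add_pow, Finset.mul_sum]
      refine Finset.sum_congr rfl fun i hi => ?_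
      have hin : i ≤ n := Finset.mem_range_succ_iff.mp hi
      have key : i.factorial * (n - i).factorial * n.choose i = n.factorial :=
        Nat.choose_mul_factorial_mul_factorial hin |>.symm ▸ by ring
      calc x ^ i * y ^ (n - i) * (n.choose i : B)
          = ((i.factorial * (n - i).factorial * n.choose i : ℕ) : B) * (f i * g (n - i)) := by
            rw [hf, hg]; push_cast; ring
        _ = (n.factorial : B) * (f i * g (n - i)) := by rw [key]
    · intro c x hx n hn
      obtain ⟨y, hy⟩ := hx n hn
      exact ⟨c ^ n * y, by simp [smul_eq_mul, mul_pow, hy]; ring⟩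
  · intro x hx m hm z hz n hn
    obtain ⟨y, hy⟩ := hx (n * m) (by exact Nat.one_le_iff_ne_zero.mpr (by positivity))
    refine ⟨(Nat.uniformBell n m : B) * y, ?_⟩
    have hcancel : ∀ (k : ℕ), k ≠ 0 → ∀ a b : B, (k : B) * a = (k : B) * b → a = b := by
      intro k hk a b h
      have := htf k hk (a - b) (by rw [mul_sub, h, sub_self])
      exact sub_eq_zero.mp this
    have hbell := Nat.uniformBell_mul_eq n (show m ≠ 0 by omega)
    have key : ((m.factorial : B)) ^ n * z ^ n
        = (m.factorial : B) ^ n * ((n.factorial : B) * ((Nat.uniformBell n m : B) * y)) := by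
      calc ((m.factorial : B)) ^ n * z ^ n = (x ^ m) ^ n := by rw [hz, mul_pow]
        _ = x ^ (n * m) := by rw [← pow_mul, mul_comm]
        _ = ((n * m).factorial : B) * y := hy
        _ = ((Nat.uniformBell n m * m.factorial ^ n * n.factorial : ℕ) : B) * y := by
            rw [hbell]
        _ = (m.factorial : B) ^ n * ((n.factorial : B) * ((Nat.uniformBell n m : B) * y)) := by
            push_cast; ring
    have hne : m.factorial ^ n ≠ 0 := pow_ne_zero _ m.factorial_pos.ne'
    have := hcancel (m.factorial ^ n) hne _ _ (by push_cast at key ⊢; exact key)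
    exact this
end

section
/- Let M be an A-module that is separated and complete with respect to a decreasing filtration F^• M by submodules satisfying p^n M ⊆ F^n M for all n (i.e. M ≅ lim M/F^n M). Then M is also p-adically separated and complete: M ≅ lim M/p^n M. -/
/-- Let `M` be an `A`-module, separated and complete for a decreasing
filtration `F^•M` by submodules with `p^nM ⊆ F^nM` for all `n`.  Then `M` is `p`-adically
separated and complete.  (Separation and completeness are expressed via Cauchy sequences:
`M ≅ lim M/F^nM` iff `⋂ F^nM = 0` and every `F`-adic Cauchy sequence converges.) -/
theorem statement5 (p : ℕ) (hp : p.Prime) (A : Type*) [CommRing A]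
    (M : Type*) [AddCommGroup M] [Module A M]
    (F : ℕ → Submodule A M) (hdec : ∀ n, F (n + 1) ≤ F n)
    (hpF : ∀ n, ∀ y : M, ((p : A) ^ n) • y ∈ F n)
    (hsep : ∀ x : M, (∀ n, x ∈ F n) → x = 0)
    (hcomp : ∀ x : ℕ → M, (∀ n, x (n + 1) - x n ∈ F n) →
      ∃ y : M, ∀ n, y - x n ∈ F n) :
    (∀ x : M, (∀ n : ℕ, ∃ y : M, x = ((p : A) ^ n) • y) → x = 0) ∧
    (∀ x : ℕ → M, (∀ n : ℕ, ∃ y : M, x (n + 1) - x n = ((p : A) ^ n) • y) →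
      ∃ z : M, ∀ n : ℕ, ∃ y : M, z - x n = ((p : A) ^ n) • y) := by
  -- antitone version of hdec
  have hmono : ∀ {m n : ℕ}, m ≤ n → F n ≤ F m := by
    intro m n h
    induction h with
    | refl => exact le_rfl
    | step h ih => exact le_trans (hdec _) ih
  constructor
  · intro x hx
    apply hsep
    intro n
    obtain ⟨y, hy⟩ := hx n
    rw [hy]; exact hpF n y
  · intro x hx
    choose y hy using hx
    -- the sequence x is F-Cauchy
    obtain ⟨z, hz⟩ := hcomp x (fun n => by rw [hy n]; exact hpF n (y n))
    refine ⟨z, fun n => ?_⟩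
    -- partial sums of the tail divided by p^n
    set s : ℕ → M := fun k => ∑ j ∈ Finset.range k, ((p : A) ^ j) • y (n + j) with hs
    have hsx : ∀ k, x (n + k) - x n = ((p : A) ^ n) • s k := by
      intro k
      induction k with
      | zero => simp [hs]
      | succ k ih =>
          have : x (n + (k + 1)) - x n = (x ((n + k) + 1) - x (n + k)) + (x (n + k) - x n) := by
            have : n + (k + 1) = (n + k) + 1 := by ring
            rw [this]; abel
          rw [this, hy (n + k), ih, hs]
          simp only [Finset.sum_range_succ]
          rw [smul_add, smul_smul, ← pow_add]
          abel
      -- end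
    have hsc : ∀ k, s (k + 1) - s k ∈ F k := by
      intro k
      have : s (k + 1) - s k = ((p : A) ^ k) • y (n + k) := by
        rw [hs]; simp [Finset.sum_range_succ]
      rw [this]; exact hpF k _
    obtain ⟨t, ht⟩ := hcomp s hsc
    refine ⟨t, ?_⟩
    have key : ∀ k, z - x n - ((p : A) ^ n) • t ∈ F k := by
      intro k
      have h1 : z - x (n + k) ∈ F k := hmono (Nat.le_add_left k n) (hz (n + k))
      have h2 : ((p : A) ^ n) • (s k - t) ∈ F k := by
        apply (F k).smul_mem
        have := (F k).neg_mem (ht k)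
        rwa [neg_sub] at this
      have heq : z - x n - ((p : A) ^ n) • t
          = (z - x (n + k)) + ((p : A) ^ n) • (s k - t) := by
        rw [smul_sub, ← hsx k]; abel
      rw [heq]
      exact (F k).add_mem h1 h2
    have := hsep _ key
    linear_combination (norm := abel) this
end

section
/- Let (M_n)_{n≥1} be an inverse system of A-modules with p^n M_n = 0 such that each transition map induces an isomorphism M_n ⊗_A A/p^{n-1} ≅ M_{n-1}. Let M̂ := lim M_n and let F^n ⊆ M̂ be the kernel of the projection M̂ → M_n. Then F^n = p^n M̂ for every n; consequently the natural map M̂ ⊗_A A/p^n A → M_n is an isomorphism for each n and M̂ is p-adically separated and complete. -/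
section Aux

variable {A : Type*} [CommRing A] {M : ℕ → Type*}
  [∀ n, AddCommGroup (M n)] [∀ n, Module A (M n)]

def cM (M : ℕ → Type*) {a b : ℕ} (h : a = b) (x : M a) : M b := h ▸ x
theorem cM_refl (M : ℕ → Type*) {a : ℕ} (h : a = a) (x : M a) : cM M h x = x := rfl
theorem cM_trans (M : ℕ → Type*) {a b c : ℕ} (h : a = b) (h' : b = c) (x : M a) :
    cM M h' (cM M h x) = cM M (h.trans h') x := by subst h; subst h'; rfl
theorem t_cM (t : ∀ n, M (n+1) →ₗ[A] M n) {a b : ℕ} (h : a = b) (h' : a + 1 = b + 1)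
    (w : M (a+1)) : t b (cM M h' w) = cM M h (t a w) := by subst h; rfl

def T (t : ∀ n, M (n+1) →ₗ[A] M n) : ∀ (m k : ℕ), M (m + k) →ₗ[A] M m
  | _, 0 => LinearMap.id
  | m, k+1 => (T t m k).comp (t (m+k))

theorem t_T (t : ∀ n, M (n+1) →ₗ[A] M n) :
    ∀ (k m : ℕ) (h : (m+1)+k = m+(k+1)) (w : M ((m+1)+k)),
      t m (T t (m+1) k w) = T t m (k+1) (cM M h w)
  | 0, m, h, w => rfl
  | k+1, m, h, w => by
      have h0 : (m+1)+k = m+(k+1) := by omega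
      show t m (T t (m+1) k (t ((m+1)+k) w)) = T t m (k+1) (t (m+(k+1)) (cM M h w))
      rw [t_T t k m h0 (t ((m+1)+k) w)]
      congr 1
      exact (t_cM t h0 h w).symm

theorem compat_T (t : ∀ n, M (n+1) →ₗ[A] M n) (x : ∀ m, M m)
    (hc : ∀ m, t m (x (m+1)) = x m) : ∀ (m k : ℕ), T t m k (x (m+k)) = x m
  | _, 0 => rfl
  | m, k+1 => by
      show T t m k (t (m+k) (x ((m+k)+1))) = x m
      rw [hc (m+k)]; exact compat_T t x hc m k

theorem zero_pushdown (t : ∀ n, M (n+1) →ₗ[A] M n) (x : ∀ m, M m)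
    (hc : ∀ m, t m (x (m+1)) = x m) (n m : ℕ) (h : x (n+m) = 0) : x m = 0 := by
  have h' : x (m+n) = 0 := by rw [Nat.add_comm m n]; exact h
  rw [← compat_T t x hc m n, h', map_zero]

noncomputable def vseq (t : ∀ n, M (n+1) →ₗ[A] M n)
    (hsurj : ∀ n, Function.Surjective (t n)) (n : ℕ) (z : M n) : ∀ k, M (n + k)
  | 0 => z
  | k+1 => (hsurj (n+k) (vseq t hsurj n z k)).choose

theorem vseq_spec (t : ∀ n, M (n+1) →ₗ[A] M n)
    (hsurj : ∀ n, Function.Surjective (t n)) (n : ℕ) (z : M n) (k : ℕ) :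
    t (n+k) (vseq t hsurj n z (k+1)) = vseq t hsurj n z k :=
  (hsurj (n+k) (vseq t hsurj n z k)).choose_spec

theorem T_vseq (t : ∀ n, M (n+1) →ₗ[A] M n)
    (hsurj : ∀ n, Function.Surjective (t n)) (n : ℕ) (z : M n) :
    ∀ k, T t n k (vseq t hsurj n z k) = z
  | 0 => rfl
  | k+1 => by
      show T t n k (t (n+k) (vseq t hsurj n z (k+1))) = z
      rw [vseq_spec t hsurj n z k]; exact T_vseq t hsurj n z k

noncomputable def liftL (t : ∀ n, M (n+1) →ₗ[A] M n)
    (hsurj : ∀ n, Function.Surjective (t n)) (n : ℕ) (z : M n) : ∀ m, M m :=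
  fun m => T t m n (cM M (Nat.add_comm n m) (vseq t hsurj n z m))

theorem liftL_self (t : ∀ n, M (n+1) →ₗ[A] M n)
    (hsurj : ∀ n, Function.Surjective (t n)) (n : ℕ) (z : M n) :
    liftL t hsurj n z n = z := by
  show T t n n (cM M (Nat.add_comm n n) (vseq t hsurj n z n)) = z
  rw [cM_refl, T_vseq]

theorem liftL_compat (t : ∀ n, M (n+1) →ₗ[A] M n)
    (hsurj : ∀ n, Function.Surjective (t n)) (n : ℕ) (z : M n) (m : ℕ) :
    t m (liftL t hsurj n z (m+1)) = liftL t hsurj n z m := by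
  have h3 : n+(m+1) = m+(n+1) := by omega
  have h4 : n+m = m+n := Nat.add_comm n m
  show t m (T t (m+1) n (cM M (Nat.add_comm n (m+1)) (vseq t hsurj n z (m+1))))
      = T t m n (cM M (Nat.add_comm n m) (vseq t hsurj n z m))
  rw [t_T t n m (by omega), cM_trans]
  show T t m n (t (m+n) (cM M h3 (vseq t hsurj n z (m+1))))
      = T t m n (cM M (Nat.add_comm n m) (vseq t hsurj n z m))
  rw [t_cM t h4 h3, vseq_spec]

variable (t : ∀ n, M (n+1) →ₗ[A] M n) (π : A)
variable (hsurj : ∀ n, Function.Surjective (t n))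
variable (hker : ∀ n (x : M (n+1)), t n x = 0 ↔ ∃ y : M (n+1), x = π ^ n • y)

/-- Correction term: a global lift of a `π^(n+i)`-divisor of `X (n+i+1)`. -/
noncomputable def Cof (n i : ℕ) (X : ∀ m, M m) (h : t (n+i) (X (n+i+1)) = 0) : ∀ m, M m :=
  liftL t hsurj (n+i+1) ((hker (n+i) (X (n+i+1))).mp h).choose

theorem Cof_compat (n i : ℕ) (X : ∀ m, M m) (h : t (n+i) (X (n+i+1)) = 0) (m : ℕ) :
    t m (Cof t π hsurj hker n i X h (m+1)) = Cof t π hsurj hker n i X h m :=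
  liftL_compat t hsurj _ _ m

theorem Cof_self (n i : ℕ) (X : ∀ m, M m) (h : t (n+i) (X (n+i+1)) = 0) :
    X (n+i+1) = π ^ (n+i) • Cof t π hsurj hker n i X h (n+i+1) := by
  rw [show Cof t π hsurj hker n i X h (n+i+1)
        = ((hker (n+i) (X (n+i+1))).mp h).choose from liftL_self t hsurj _ _]
  exact ((hker (n+i) (X (n+i+1))).mp h).choose_spec

/-- State of the successive approximation. -/
noncomputable def Gstep (n i : ℕ)
    (X : {X : ∀ m, M m // (∀ m, t m (X (m+1)) = X m) ∧ X (n+i) = 0}) :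
    {X' : ∀ m, M m // (∀ m, t m (X' (m+1)) = X' m) ∧ X' (n+(i+1)) = 0} :=
  ⟨fun m => X.1 m - π ^ (n+i) • Cof t π hsurj hker n i X.1
      (by rw [X.2.1 (n+i), X.2.2]) m,
   fun m => by
     rw [map_sub, map_smul, X.2.1 m, Cof_compat],
   sub_eq_zero_of_eq (Cof_self t π hsurj hker n i X.1 (by rw [X.2.1 (n+i), X.2.2]))⟩

noncomputable def Gseq (n : ℕ) (x0 : ∀ m, M m) (hc : ∀ m, t m (x0 (m+1)) = x0 m)
    (h0 : x0 n = 0) :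
    ∀ i, {X : ∀ m, M m // (∀ m, t m (X (m+1)) = X m) ∧ X (n+i) = 0} :=
  fun i => Nat.rec ⟨x0, hc, h0⟩ (fun i Xi => Gstep t π hsurj hker n i Xi) i

noncomputable def Cseq (n : ℕ) (x0 : ∀ m, M m) (hc : ∀ m, t m (x0 (m+1)) = x0 m)
    (h0 : x0 n = 0) (i : ℕ) : ∀ m, M m :=
  Cof t π hsurj hker n i (Gseq t π hsurj hker n x0 hc h0 i).1
    (by rw [(Gseq t π hsurj hker n x0 hc h0 i).2.1 (n+i),
            (Gseq t π hsurj hker n x0 hc h0 i).2.2])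

theorem Gseq_succ (n : ℕ) (x0 : ∀ m, M m) (hc : ∀ m, t m (x0 (m+1)) = x0 m)
    (h0 : x0 n = 0) (i m : ℕ) :
    (Gseq t π hsurj hker n x0 hc h0 (i+1)).1 m
      = (Gseq t π hsurj hker n x0 hc h0 i).1 m
        - π ^ (n+i) • Cseq t π hsurj hker n x0 hc h0 i m := rfl

theorem Gseq_sum (n : ℕ) (x0 : ∀ m, M m) (hc : ∀ m, t m (x0 (m+1)) = x0 m)
    (h0 : x0 n = 0) :
    ∀ (k : ℕ) (m : ℕ),
      x0 m = (∑ i ∈ Finset.range k, π ^ (n+i) • Cseq t π hsurj hker n x0 hc h0 i m)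
        + (Gseq t π hsurj hker n x0 hc h0 k).1 m
  | 0, m => by simp [Gseq]
  | k+1, m => by
      have ih := Gseq_sum n x0 hc h0 k m
      rw [Finset.sum_range_succ, Gseq_succ t π hsurj hker n x0 hc h0 k, ih]
      abel

theorem part1_fwd (hsurj' : ∀ n, Function.Surjective (t n))
    (hker' : ∀ n (x : M (n+1)), t n x = 0 ↔ ∃ y : M (n+1), x = π ^ n • y)
    (hkill : ∀ n (x : M n), π ^ n • x = 0)
    (n : ℕ) (x0 : ∀ m, M m) (hc : ∀ m, t m (x0 (m+1)) = x0 m) (h0 : x0 n = 0) :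
    ∃ y : ∀ m, M m, (∀ m, t m (y (m+1)) = y m) ∧ ∀ m, x0 m = π ^ n • y m := by
  set C := Cseq t π hsurj' hker' n x0 hc h0 with hC
  refine ⟨fun m => ∑ i ∈ Finset.range m, π ^ i • C i m, fun m => ?_, fun m => ?_⟩
  · rw [map_sum]
    have : ∀ i ∈ Finset.range (m+1), t m (π ^ i • C i (m+1)) = π ^ i • C i m := by
      intro i _
      rw [map_smul, hC]
      exact congrArg _ (Cof_compat t π hsurj' hker' n i _ _ m)
    rw [Finset.sum_congr rfl this, Finset.sum_range_succ, hkill m (C m m), add_zero]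
  · have hsum := Gseq_sum t π hsurj' hker' n x0 hc h0 m m
    have hz : (Gseq t π hsurj' hker' n x0 hc h0 m).1 m = 0 :=
      zero_pushdown t _ (Gseq t π hsurj' hker' n x0 hc h0 m).2.1 n m
        (Gseq t π hsurj' hker' n x0 hc h0 m).2.2
    rw [hz, add_zero] at hsum
    rw [hsum, Finset.smul_sum]
    refine Finset.sum_congr rfl fun i _ => ?_
    rw [← mul_smul, ← pow_add]

end Aux



/-- Drinfeld–Temkin.  Let `(M n)` be an inverse system of `A`-modules
with `p^n M n = 0`, whose transition maps `t n : M (n+1) → M n` are surjective with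
kernel `p^n · M (n+1)` (i.e. they induce isomorphisms `M (n+1) ⊗ A/p^n ≅ M n`).
Let `L = lim M n`, realized as the compatible families.  Then the kernel `F^n` of the
projection `L → M n` equals `p^n L`; consequently the natural map `L ⊗ A/p^n → M n` is an
isomorphism for each `n` (the projections are surjective with kernel `p^n L`) and `L` is
`p`-adically separated and complete. -/
theorem statement6 (p : ℕ) (hp : p.Prime) (A : Type*) [CommRing A]
    (M : ℕ → Type*) [∀ n, AddCommGroup (M n)] [∀ n, Module A (M n)]
    (hkill : ∀ n, ∀ x : M n, ((p : A) ^ n) • x = 0)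
    (t : ∀ n, M (n + 1) →ₗ[A] M n)
    (hsurj : ∀ n, Function.Surjective (t n))
    (hker : ∀ n (x : M (n + 1)), t n x = 0 ↔ ∃ y : M (n + 1), x = ((p : A) ^ n) • y) :
    -- `F^n = p^n L`, surjectivity of projections, and `p`-adic separation/completeness:
    (∀ (n : ℕ) (x : {x : (m : ℕ) → M m // ∀ m, t m (x (m + 1)) = x m}),
        x.1 n = 0 ↔ ∃ y : {x : (m : ℕ) → M m // ∀ m, t m (x (m + 1)) = x m},
          ∀ m, x.1 m = ((p : A) ^ n) • y.1 m) ∧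
    (∀ (n : ℕ) (z : M n), ∃ x : {x : (m : ℕ) → M m // ∀ m, t m (x (m + 1)) = x m},
        x.1 n = z) ∧
    (∀ x : {x : (m : ℕ) → M m // ∀ m, t m (x (m + 1)) = x m},
        (∀ n : ℕ, ∃ y : {x : (m : ℕ) → M m // ∀ m, t m (x (m + 1)) = x m},
          ∀ m, x.1 m = ((p : A) ^ n) • y.1 m) → ∀ m, x.1 m = 0) ∧
    (∀ c : ℕ → {x : (m : ℕ) → M m // ∀ m, t m (x (m + 1)) = x m},
        (∀ n : ℕ, ∃ y : {x : (m : ℕ) → M m // ∀ m, t m (x (m + 1)) = x m},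
          ∀ m, (c (n + 1)).1 m - (c n).1 m = ((p : A) ^ n) • y.1 m) →
        ∃ z : {x : (m : ℕ) → M m // ∀ m, t m (x (m + 1)) = x m},
          ∀ n : ℕ, ∃ y : {x : (m : ℕ) → M m // ∀ m, t m (x (m + 1)) = x m},
            ∀ m, z.1 m - (c n).1 m = ((p : A) ^ n) • y.1 m) := by
  refine ⟨fun n x => ⟨fun h0 => ?_, fun ⟨y, hy⟩ => by rw [hy n, hkill n]⟩,
    fun n z => ⟨⟨liftL t hsurj n z, liftL_compat t hsurj n z⟩, liftL_self t hsurj n z⟩,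
    fun x h m => ?_, fun c hc => ?_⟩
  · obtain ⟨y, hyc, hy⟩ := part1_fwd t ((p : A)) hsurj hker hkill n x.1 x.2 h0
    exact ⟨⟨y, hyc⟩, hy⟩
  · obtain ⟨y, hy⟩ := h m
    rw [hy m, hkill m]
  · have zc : ∀ m, t m ((c (m+1)).1 (m+1)) = (c m).1 m := by
      intro m
      obtain ⟨y, hy⟩ := hc m
      have h1 := hy m
      rw [hkill m (y.1 m), sub_eq_zero] at h1
      rw [(c (m+1)).2 m, h1]
    refine ⟨⟨fun m => (c m).1 m, zc⟩, fun n => ?_⟩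
    have hdc : ∀ m, t m (((c (m+1)).1 (m+1) - (c n).1 (m+1))) =
        (c m).1 m - (c n).1 m := by
      intro m
      rw [map_sub, zc m, (c n).2 m]
    obtain ⟨y, hyc, hy⟩ := part1_fwd t ((p : A)) hsurj hker hkill n
      (fun m => (c m).1 m - (c n).1 m) hdc (sub_self _)
    exact ⟨⟨y, hyc⟩, fun m => hy m⟩
end

section
/- Let A be a p-torsion-free commutative ring and a ∈ A an element such that (p, a) is an A-regular sequence. Let A[t]^ denote the p-adic completion of the polynomial ring A[t]. Then the quotient A[t]^/(pt − a) is p-torsion free. -/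
open AdicCompletion Submodule

section
variable {R : Type*} [CommRing R] (π : R)

lemma mem_aux (n : ℕ) (x : R) :
    x ∈ ((Ideal.span {π})^n • ⊤ : Ideal R) ↔ π^n ∣ x := by
  rw [smul_eq_mul, Ideal.mul_top, Ideal.span_singleton_pow, Ideal.mem_span_singleton]

lemma cancel_aux (htf : ∀ x : R, π * x = 0 → x = 0) {x y : R} (h : π * x = π * y) : x = y :=
  sub_eq_zero.mp (htf _ (by rw [mul_sub, h, sub_self]))

lemma tf_completion (htf : ∀ x : R, π * x = 0 → x = 0)
    (x : AdicCompletion (Ideal.span {π}) R)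
    (hx : (algebraMap R (AdicCompletion (Ideal.span {π}) R) π) * x = 0) : x = 0 := by
  obtain ⟨F, rfl⟩ := AdicCompletion.mk_surjective _ _ x
  ext n
  have key : ∀ m, π ^ m ∣ π * F m := by
    intro m
    have h1 := congrArg (fun y : AdicCompletion (Ideal.span {π}) R => y.val m) hx
    simp only [AdicCompletion.val_mul, AdicCompletion.val_zero] at h1
    have h2 : Submodule.Quotient.mk (p := ((Ideal.span {π})^m • ⊤ : Ideal R)) (π * F m) = 0 := h1
    rw [Submodule.Quotient.mk_eq_zero, mem_aux] at h2
    exact h2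
  have h1 : π ^ n ∣ F (n + 1) := by
    obtain ⟨u, hu⟩ := key (n + 1)
    exact ⟨u, cancel_aux π htf (by rw [hu]; ring)⟩
  have h2 : π ^ n ∣ (F n : R) - F (n + 1) := by
    have := F.property (Nat.le_succ n)
    rw [SModEq.sub_mem, mem_aux] at this
    exact this
  have h3 : π ^ n ∣ (F n : R) := by simpa using h2.add h1
  show Submodule.Quotient.mk (p := ((Ideal.span {π})^n • ⊤ : Ideal R)) (F n) = 0
  rw [Submodule.Quotient.mk_eq_zero, mem_aux]
  exact h3

lemma dvd_completion (htf : ∀ x : R, π * x = 0 → x = 0) (b : R)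
    (hreg : ∀ x : R, π ∣ b * x → π ∣ x)
    (x : AdicCompletion (Ideal.span {π}) R)
    (hx : (algebraMap R (AdicCompletion (Ideal.span {π}) R) π) ∣
      (algebraMap R (AdicCompletion (Ideal.span {π}) R) b) * x) :
    (algebraMap R (AdicCompletion (Ideal.span {π}) R) π) ∣ x := by
  obtain ⟨g, hg⟩ := hx
  obtain ⟨F, rfl⟩ := AdicCompletion.mk_surjective _ _ x
  obtain ⟨G, rfl⟩ := AdicCompletion.mk_surjective _ _ g
  have key : ∀ m, π ^ m ∣ b * F m - π * G m := by
    intro m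
    have h1 := congrArg (fun y : AdicCompletion (Ideal.span {π}) R => y.val m) hg
    simp only [AdicCompletion.val_mul] at h1
    have h2 : Submodule.Quotient.mk (p := ((Ideal.span {π})^m • ⊤ : Ideal R)) (b * F m)
        = Submodule.Quotient.mk (π * G m) := h1
    rw [Submodule.Quotient.eq] at h2
    exact (mem_aux π m _).mp h2
  have hdvd : ∀ m, π ∣ (F (m + 1) : R) := by
    intro m
    apply hreg
    obtain ⟨u, hu⟩ := key (m + 1)
    exact ⟨G (m+1) + π^m * u, by linear_combination hu⟩
  choose H hH using hdvd
  have hcau : ∀ n, H n ≡ H (n + 1) [SMOD ((Ideal.span {π})^n • ⊤ : Ideal R)] := by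
    intro n
    rw [SModEq.sub_mem, mem_aux]
    have hd : π ^ (n+1) ∣ (F (n+1) : R) - F (n+2) := by
      have := F.property (Nat.le_succ (n+1))
      rw [SModEq.sub_mem, mem_aux] at this
      exact this
    obtain ⟨u, hu⟩ := hd
    exact ⟨u, cancel_aux π htf (by rw [mul_sub, ← hH, ← hH]; linear_combination hu)⟩
  refine ⟨AdicCompletion.mk _ _ (AdicCauchySequence.mk _ _ H hcau), ?_⟩
  ext n
  have h4 : π ^ n ∣ (F n : R) - π * H n := by
    rw [← hH]
    have := F.property (Nat.le_succ n)
    rw [SModEq.sub_mem, mem_aux] at this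
    exact this
  show Submodule.Quotient.mk (p := ((Ideal.span {π})^n • ⊤ : Ideal R)) (F n)
      = (Ideal.Quotient.mk _ π) * Submodule.Quotient.mk (H n)
  rw [show (Ideal.Quotient.mk ((Ideal.span {π})^n • ⊤ : Ideal R) π) *
      Submodule.Quotient.mk (H n) = Submodule.Quotient.mk
        (p := ((Ideal.span {π})^n • ⊤ : Ideal R)) (π * H n) from rfl,
    Submodule.Quotient.eq]
  exact (mem_aux π n _).mpr h4

end

/-- Let `A` be a `p`-torsion-free commutative ring and `a ∈ A` with
`(p, a)` an `A`-regular sequence (`a` is a nonzerodivisor on `A/pA`).  Let `A[t]^` be the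
`p`-adic completion of the polynomial ring `A[t]`.  Then `A[t]^/(pt − a)` is `p`-torsion
free. -/
theorem statement11 (p : ℕ) (hp : p.Prime) (A : Type*) [CommRing A]
    (htf : ∀ x : A, (p : A) * x = 0 → x = 0)
    (a : A) (hreg : ∀ x : A, (p : A) ∣ a * x → (p : A) ∣ x) :
    ∀ z : (AdicCompletion (Ideal.span {(p : Polynomial A)}) (Polynomial A)) ⧸
        (Ideal.span {algebraMap (Polynomial A)
            (AdicCompletion (Ideal.span {(p : Polynomial A)}) (Polynomial A))
            ((p : Polynomial A) * Polynomial.X - Polynomial.C a)}),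
      (p : (AdicCompletion (Ideal.span {(p : Polynomial A)}) (Polynomial A)) ⧸
        (Ideal.span {algebraMap (Polynomial A)
            (AdicCompletion (Ideal.span {(p : Polynomial A)}) (Polynomial A))
            ((p : Polynomial A) * Polynomial.X - Polynomial.C a)})) * z = 0 → z = 0 := by
  have htfB : ∀ f : Polynomial A, (p : Polynomial A) * f = 0 → f = 0 := by
    intro f hf
    rw [← Polynomial.C_eq_natCast] at hf
    ext n
    have h1 := congrArg (fun g => Polynomial.coeff g n) hf
    simp only [Polynomial.coeff_C_mul, Polynomial.coeff_zero] at h1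
    simpa using htf _ h1
  have hregB : ∀ f : Polynomial A, (p : Polynomial A) ∣ Polynomial.C a * f
      → (p : Polynomial A) ∣ f := by
    intro f hf
    rw [← Polynomial.C_eq_natCast, Polynomial.C_dvd_iff_dvd_coeff] at hf ⊢
    intro i
    apply hreg
    simpa [Polynomial.coeff_C_mul] using hf i
  set C := AdicCompletion (Ideal.span {(p : Polynomial A)}) (Polynomial A) with hC
  set w : C := algebraMap (Polynomial A) C
      ((p : Polynomial A) * Polynomial.X - Polynomial.C a) with hw
  have hpC : (p : C) = algebraMap (Polynomial A) C (p : Polynomial A) := by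
    rw [map_natCast]
  intro z hz
  obtain ⟨x, rfl⟩ := Ideal.Quotient.mk_surjective z
  rw [show ((p : C ⧸ Ideal.span {w}) * (Ideal.Quotient.mk _ x))
        = Ideal.Quotient.mk _ ((p : C) * x) by rw [map_mul, map_natCast],
      Ideal.Quotient.eq_zero_iff_mem, Ideal.mem_span_singleton] at hz
  obtain ⟨c, hc⟩ := hz
  have hdvd : algebraMap (Polynomial A) C (p : Polynomial A)
      ∣ algebraMap (Polynomial A) C (Polynomial.C a) * c := by
    refine ⟨c * algebraMap (Polynomial A) C Polynomial.X - x, ?_⟩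
    have hw' : w = algebraMap (Polynomial A) C (p : Polynomial A)
        * algebraMap (Polynomial A) C Polynomial.X
        - algebraMap (Polynomial A) C (Polynomial.C a) := by rw [hw, map_sub, map_mul]
    rw [hw', hpC] at hc
    linear_combination hc
  obtain ⟨g, hg⟩ := dvd_completion ((p : Polynomial A)) htfB (Polynomial.C a) hregB c hdvd
  have hx : x = g * w := by
    have h0 : algebraMap (Polynomial A) C (p : Polynomial A) * (x - g * w) = 0 := by
      rw [hg, hpC] at hc
      linear_combination hc
    have h1 := tf_completion ((p : Polynomial A)) htfB (x - g * w) h0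
    linear_combination h1
  rw [Ideal.Quotient.eq_zero_iff_mem, Ideal.mem_span_singleton]
  exact ⟨g, by linear_combination hx⟩
end

section
/- Let B be a p-torsion-free commutative ring, I ⊆ B an ideal containing p, and ψ : B → B an endomorphism with ψ(b) ≡ b^p (mod I) for all b ∈ B (so ψ(I) ⊆ I). Let θ : B → B′ be a B-algebra with B′ p-torsion free in which I·B′ = p·B′, equipped with the unique additive map ρ : I → B′ satisfying p·ρ(x) = θ(x), and suppose ψ extends to an endomorphism ψ′ of B′ compatible with θ. For x ∈ I set ε′(x) := ψ′(ρ(x)) − ρ(x)^p ∈ B′. Then for all x, y ∈ I and b ∈ B: (1) ρ(ψ(x)) = ψ′(ρ(x)); (2) ε′(x + y) ≡ ε′(x) + ε′(y) (mod pB′); (3) ε′(bx) ≡ θ(b^p)·ε′(x) (mod pB′). -/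
/-- Let `B` be a `p`-torsion-free commutative ring, `I ⊆ B` an ideal
containing `p`, and `ψ : B → B` an endomorphism with `ψ(b) ≡ b^p (mod I)` for all `b`.
Let `θ : B → B′` be a `p`-torsion-free `B`-algebra in which `I·B′ = p·B′`, with the
(unique) map `ρ : I → B′` satisfying `p·ρ(x) = θ(x)`, and suppose `ψ` extends to an
endomorphism `ψ′` of `B′` compatible with `θ`.  Setting `ε′(x) = ψ′(ρ(x)) − ρ(x)^p`,
we have for all `x, y ∈ I` and `b ∈ B`:
(1) `ρ(ψ(x)) = ψ′(ρ(x))`;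
(2) `ε′(x+y) ≡ ε′(x) + ε′(y) (mod pB′)`;
(3) `ε′(bx) ≡ θ(b^p)·ε′(x) (mod pB′)`. -/
theorem statement17 (p : ℕ) (hp : p.Prime)
    (B : Type*) [CommRing B] (htfB : ∀ x : B, (p : B) * x = 0 → x = 0)
    (B' : Type*) [CommRing B'] (htfB' : ∀ x : B', (p : B') * x = 0 → x = 0)
    (I : Ideal B) (hpI : (p : B) ∈ I)
    (ψ : B →+* B) (hψ : ∀ b : B, ψ b - b ^ p ∈ I)
    (θ : B →+* B') (hIB' : Ideal.map θ I = Ideal.span {(p : B')})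
    (ρ : I → B') (hρ : ∀ x : I, (p : B') * ρ x = θ x)
    (ψ' : B' →+* B') (hcompat : ∀ b : B, ψ' (θ b) = θ (ψ b)) :
    (∀ (x : I) (hx : ψ x ∈ I), ρ ⟨ψ x, hx⟩ = ψ' (ρ x)) ∧
    (∀ x y : I, ∃ c : B',
      (ψ' (ρ (x + y)) - ρ (x + y) ^ p)
        = (ψ' (ρ x) - ρ x ^ p) + (ψ' (ρ y) - ρ y ^ p) + (p : B') * c) ∧
    (∀ (b : B) (x : I), ∃ c : B',
      (ψ' (ρ (b • x)) - ρ (b • x) ^ p)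
        = θ (b ^ p) * (ψ' (ρ x) - ρ x ^ p) + (p : B') * c) := by
  have cancel : ∀ a b : B', (p : B') * a = (p : B') * b → a = b := by
    intro a b h
    have h0 : (p : B') * (a - b) = 0 := by rw [mul_sub, h, sub_self]
    exact sub_eq_zero.mp (htfB' _ h0)
  -- (1)
  have part1 : ∀ (x : I) (hx : ψ (x : B) ∈ I), ρ ⟨ψ x, hx⟩ = ψ' (ρ x) := by
    intro x hx
    apply cancel
    rw [hρ]
    have : ψ' ((p : B') * ρ x) = ψ' (θ x) := by rw [hρ]
    simpa [hcompat, map_mul, map_natCast] using this.symm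
  have hadd : ∀ x y : I, ρ (x + y) = ρ x + ρ y := by
    intro x y
    apply cancel
    rw [hρ, mul_add, hρ, hρ]
    simp [map_add]
  refine ⟨part1, ?_, ?_⟩
  · intro x y
    obtain ⟨r, hr⟩ := exists_add_pow_prime_eq hp (ρ x) (ρ y)
    refine ⟨-(ρ x * ρ y * r), ?_⟩
    rw [hadd, map_add, hr]
    ring
  · intro b x
    have hsmul : ρ (b • x) = θ b * ρ x := by
      apply cancel
      rw [hρ]
      have : ((b • x : I) : B) = b * (x : B) := rfl
      rw [this, map_mul]
      rw [← hρ x]; ring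
    obtain ⟨c', hc'⟩ : ∃ c' : B', θ (ψ b) = θ (b ^ p) + (p : B') * c' := by
      have : θ (ψ b - b ^ p) ∈ Ideal.map θ I := Ideal.mem_map_of_mem θ (hψ b)
      rw [hIB', Ideal.mem_span_singleton] at this
      obtain ⟨c', hc'⟩ := this
      exact ⟨c', by rw [← hc', map_sub]; ring⟩
    refine ⟨c' * ψ' (ρ x), ?_⟩
    rw [hsmul, map_mul, hcompat, hc', mul_pow, ← map_pow]
    ring
end

section
/- Let C be a p-torsion-free commutative ring with Frobenius lift φ, and for c ∈ C with c^p ∈ pC let c = c₀, c₁, c₂, … be a sequence with c_i^p = p·c_{i+1} for all i ≥ 0. Then for every n ≥ 1, writing n = Σ_i a_i p^i in base p and σ := Σ_i a_i, one has c^n ∈ p^{(n−σ)/(p−1)}·C. -/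
/-- Let `C` be a `p`-torsion-free commutative ring with Frobenius lift
`φ`, and let `c = c₀, c₁, c₂, …` be a sequence in `C` with `cᵢ^p = p·c_{i+1}` for all
`i`.  Then for every `n ≥ 1`, writing `n = Σ aᵢ pⁱ` in base `p` and `σ = Σ aᵢ` (the sum
of the base-`p` digits of `n`), one has `c^n ∈ p^{(n−σ)/(p−1)}·C` (and
`(n−σ)/(p−1) = ord_p(n!)`). -/
theorem statement18 (p : ℕ) (hp : p.Prime) (C : Type*) [CommRing C]
    (htf : ∀ x : C, (p : C) * x = 0 → x = 0)
    (φ : C →+* C) (hφ : ∀ x : C, ∃ d : C, φ x = x ^ p + (p : C) * d)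
    (c : ℕ → C) (hc : ∀ i : ℕ, c i ^ p = (p : C) * c (i + 1)) :
    ∀ n : ℕ, 1 ≤ n →
      ∃ y : C, c 0 ^ n = (p : C) ^ ((n - (Nat.digits p n).sum) / (p - 1)) * y := by
  have hp1 : 1 < p := hp.one_lt
  have hdvd : ∀ m : ℕ, (p - 1) ∣ (m - (Nat.digits p m).sum) := by
    intro m
    rcases eq_or_lt_of_le (show 2 ≤ p from hp1) with h2 | h3
    · simpa [← h2] using one_dvd _
    · have hmod : p % (p - 1) = 1 := by
        rw [Nat.mod_eq_sub_mod (by omega), show p - (p-1) = 1 by omega,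
          Nat.mod_eq_of_lt (by omega)]
      have h := Nat.modEq_digits_sum (p - 1) p hmod m
      exact (Nat.modEq_iff_dvd' (Nat.digit_sum_le p m)).mp h.symm
  -- generalized claim over the sequence index
  have key : ∀ n : ℕ, ∀ j : ℕ,
      ∃ y : C, c j ^ n = (p : C) ^ ((n - (Nat.digits p n).sum) / (p - 1)) * y := by
    intro n
    induction n using Nat.strong_induction_on with
    | _ n ih =>
      intro j
      rcases Nat.eq_zero_or_pos n with rfl | hn
      · exact ⟨1, by simp⟩
      have hdig : Nat.digits p n = n % p :: Nat.digits p (n / p) :=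
        Nat.digits_def' hp1 hn
      have hsum : (Nat.digits p n).sum = n % p + (Nat.digits p (n / p)).sum := by
        rw [hdig]; simp
      set q := n / p with hq
      have hqsum : (Nat.digits p q).sum ≤ q := Nat.digit_sum_le p q
      have hsub : n - (Nat.digits p n).sum = (p - 1) * q + (q - (Nat.digits p q).sum) := by
        have h1 : p * q + n % p = n := Nat.div_add_mod n p
        have h2 : (p - 1) * q = p * q - q := Nat.sub_one_mul p q
        have h3 : q ≤ p * q := Nat.le_mul_of_pos_left q (by omega)
        omega
      have hexp : (n - (Nat.digits p n).sum) / (p - 1)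
          = q + (q - (Nat.digits p q).sum) / (p - 1) := by
        rw [hsub, Nat.mul_add_div (by omega)]
      obtain ⟨y, hy⟩ := ih q (Nat.div_lt_self hn hp1) (j + 1)
      refine ⟨y * c j ^ (n % p), ?_⟩
      have h1 : c j ^ n = (c j ^ p) ^ q * c j ^ (n % p) := by
        conv_lhs => rw [← Nat.div_add_mod n p]
        rw [pow_add, pow_mul]
      rw [h1, hc j, mul_pow, hy, hexp, pow_add]
      ring
  intro n _
  exact key n 0
end
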